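/- Let f : Ω → ℝ be continuous on a compact interval Ω with a unique strict local minimum at x_0 ∈ Ω° and strictly monotone on each side of x_0 (strictly decreasing on [a, x_0], strictly increasing on [x_0, b]). Define ĥ(x) = sign(x − x_0) · sqrt(f(x) − f(x_0)). Then ĥ is continuous, strictly increasing on Ω, and f(x) = f(x_0) + ĥ(x)² for all x ∈ Ω. -/
import Mathlib


/-- for f continuous with a unique strict local minimum at x₀,
strictly decreasing on [a,x₀] and strictly increasing on [x₀,b], the function
ĥ(x) = sign(x − x₀)·√(f(x) − f(x₀)) is continuous, strictly increasing, and
f(x) = f(x₀) + ĥ(x)² on [a,b]. -/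
theorem stmt18 (a b x0 : ℝ) (hax : a < x0) (hxb : x0 < b) (f : ℝ → ℝ)
    (hf : ContinuousOn f (Set.Icc a b))
    (hmin : ∀ x ∈ Set.Icc a b, x ≠ x0 → f x0 < f x)
    (hdec : StrictAntiOn f (Set.Icc a x0))
    (hinc : StrictMonoOn f (Set.Icc x0 b)) :
    ContinuousOn (fun x => Real.sign (x - x0) * Real.sqrt (f x - f x0)) (Set.Icc a b) ∧
    StrictMonoOn (fun x => Real.sign (x - x0) * Real.sqrt (f x - f x0)) (Set.Icc a b) ∧
    ∀ x ∈ Set.Icc a b,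
      f x = f x0 + (Real.sign (x - x0) * Real.sqrt (f x - f x0)) ^ 2 := by
  set g : ℝ → ℝ := fun x => Real.sign (x - x0) * Real.sqrt (f x - f x0) with hg
  have hge : ∀ x ∈ Set.Icc a b, f x0 ≤ f x := by
    intro x hx
    rcases eq_or_ne x x0 with h | h
    · simp [h]
    · exact (hmin x hx h).le
  have hx0mem : x0 ∈ Set.Icc a b := ⟨hax.le, hxb.le⟩
  have hgx0 : g x0 = 0 := by simp [hg]
  have hA : ∀ x, x < x0 → g x = -Real.sqrt (f x - f x0) := by
    intro x h
    simp [hg, Real.sign_of_neg (by linarith : x - x0 < 0)]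
  have hB : ∀ x, x0 < x → g x = Real.sqrt (f x - f x0) := by
    intro x h
    simp [hg, Real.sign_of_pos (by linarith : 0 < x - x0)]
  have hsqrtcont : ContinuousOn (fun t => Real.sqrt (f t - f x0)) (Set.Icc a b) :=
    (hf.sub continuousOn_const).sqrt
  -- continuity
  have hcont : ContinuousOn g (Set.Icc a b) := by
    intro x hx
    rcases lt_trichotomy x x0 with h | h | h
    · have hev : g =ᶠ[nhdsWithin x (Set.Icc a b)] fun t => -Real.sqrt (f t - f x0) := by
        filter_upwards [mem_nhdsWithin_of_mem_nhds (isOpen_Iio.mem_nhds h)] with t ht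
        exact hA t ht
      exact (((hsqrtcont x hx).neg).congr_of_eventuallyEq hev (hA x h))
    · subst h
      rw [ContinuousWithinAt, hgx0]
      have hsq : Filter.Tendsto (fun t => Real.sqrt (f t - f x))
          (nhdsWithin x (Set.Icc a b)) (nhds 0) := by
        have := hsqrtcont x hx
        rw [ContinuousWithinAt] at this
        simpa using this
      apply squeeze_zero_norm _ hsq
      intro t
      have h1 : |Real.sign (t - x)| ≤ 1 := by
        rcases lt_trichotomy (t - x) 0 with h' | h' | h'
        · simp [Real.sign_of_neg h']
        · simp [h']
        · simp [Real.sign_of_pos h']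
      have h2 : (0:ℝ) ≤ Real.sqrt (f t - f x) := Real.sqrt_nonneg _
      calc ‖g t‖ = |Real.sign (t - x)| * |Real.sqrt (f t - f x)| := by
            simp [hg, abs_mul]
        _ ≤ 1 * Real.sqrt (f t - f x) := by
            rw [abs_of_nonneg h2]; exact mul_le_mul_of_nonneg_right h1 h2
        _ = Real.sqrt (f t - f x) := one_mul _
    · have hev : g =ᶠ[nhdsWithin x (Set.Icc a b)] fun t => Real.sqrt (f t - f x0) := by
        filter_upwards [mem_nhdsWithin_of_mem_nhds (isOpen_Ioi.mem_nhds h)] with t ht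
        exact hB t ht
      exact ((hsqrtcont x hx).congr_of_eventuallyEq hev (hB x h))
  -- strict mono
  have hmono : StrictMonoOn g (Set.Icc a b) := by
    intro x hx y hy hxy
    rcases le_or_gt y x0 with hy0 | hy0
    · -- both ≤ x0
      have hxm : x ∈ Set.Icc a x0 := ⟨hx.1, by linarith⟩
      have hym : y ∈ Set.Icc a x0 := ⟨hy.1, hy0⟩
      have hfy : f y < f x := hdec hxm hym hxy
      have hgy : f x0 ≤ f y := hge y hy
      have hsqrt : Real.sqrt (f y - f x0) < Real.sqrt (f x - f x0) :=
        Real.sqrt_lt_sqrt (by linarith) (by linarith)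
      have hgx : g x = -Real.sqrt (f x - f x0) := hA x (by linarith)
      rcases eq_or_lt_of_le hy0 with h | h
      · rw [hgx, h, hgx0]
        have : 0 < Real.sqrt (f x - f x0) := by
          apply Real.sqrt_pos.mpr
          have := hmin x hx (by intro hc; rw [hc] at hxy; linarith)
          linarith
        linarith
      · rw [hgx, hA y h]; linarith
    · rcases le_or_gt x0 x with hx0' | hx0'
      · -- both ≥ x0
        have hxm : x ∈ Set.Icc x0 b := ⟨hx0', hx.2⟩
        have hym : y ∈ Set.Icc x0 b := ⟨by linarith, hy.2⟩
        have hfy : f x < f y := hinc hxm hym hxy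
        have hgx' : f x0 ≤ f x := hge x hx
        have hsqrt : Real.sqrt (f x - f x0) < Real.sqrt (f y - f x0) :=
          Real.sqrt_lt_sqrt (by linarith) (by linarith)
        have hgy : g y = Real.sqrt (f y - f x0) := hB y hy0
        rcases eq_or_lt_of_le hx0' with h | h
        · rw [hgy, ← h, hgx0]
          apply Real.sqrt_pos.mpr
          have := hmin y hy (by intro hc; rw [hc] at hxy; linarith)
          linarith
        · rw [hgy, hB x h]; linarith
      · -- x < x0 < y
        have hgx : g x = -Real.sqrt (f x - f x0) := hA x hx0'
        have hgy : g y = Real.sqrt (f y - f x0) := hB y hy0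
        have h1 : 0 < Real.sqrt (f x - f x0) := by
          apply Real.sqrt_pos.mpr
          have := hmin x hx (by intro hc; rw [hc] at hx0'; linarith)
          linarith
        have h2 : 0 < Real.sqrt (f y - f x0) := by
          apply Real.sqrt_pos.mpr
          have := hmin y hy (by intro hc; rw [hc] at hy0; linarith)
          linarith
        rw [hgx, hgy]; linarith
  refine ⟨hcont, hmono, ?_⟩
  intro x hx
  rcases lt_trichotomy x x0 with h | h | h
  · rw [Real.sign_of_neg (by linarith : x - x0 < 0), mul_pow,
      Real.sq_sqrt (by linarith [hge x hx])]
    ring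
  · subst h; simp
  · rw [Real.sign_of_pos (by linarith : 0 < x - x0), mul_pow,
      Real.sq_sqrt (by linarith [hge x hx])]
    ring
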